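/- Let (Θ, 𝔉) be a measurable space, μ a probability measure on Θ, and f, ρ : Θ → ℝ measurable functions. Let K ≥ 1 be a natural number, τ ∈ ℝ, and let ε ∈ (0, 1] and η ∈ (0, 1) satisfy ε ≥ (2/K)·(ln(1/η) + 1). For a sample vector ω = (ω₁, …, ω_K) ∈ Θ^K, write λ*(ω) := max_{1≤i≤K} |f(ω_i) − ρ(ω_i)|. Then, with respect to the product measure μ^K on Θ^K, the set of sample vectors ω for which the following implication holds has μ^K-measure at least 1 − η: if f(θ) − λ*(ω) ≥ τ for every θ ∈ Θ, then μ({θ ∈ Θ : ρ(θ) ≥ τ}) ≥ 1 − ε. -/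

import Mathlib

open MeasureTheory Filter Topology

/-- End-to-end verification guarantee: with confidence at least `1 - η` over `K` i.i.d.
samples `ω` from `μ`, the following holds, where `λ*(ω) = max_{1≤i≤K} |f(ωᵢ) − ρ(ωᵢ)|`:
if the verification condition `f(θ) − λ*(ω) ≥ τ` holds for all `θ`, then the safety
property `ρ(θ) ≥ τ` holds with probability at least `1 − ε`. -/
theorem end_to_end_verification_guarantee
    {Θ : Type*} [MeasurableSpace Θ] (μ : Measure Θ) [IsProbabilityMeasure μ]
    (f ρ : Θ → ℝ) (hf : Measurable f) (hρ : Measurable ρ)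
    (K : ℕ) (hK : 1 ≤ K) (τ ε η : ℝ)
    (hε : ε ∈ Set.Ioc (0 : ℝ) 1) (hη : η ∈ Set.Ioo (0 : ℝ) 1)
    (hcond : ε ≥ (2 / K) * (Real.log (1 / η) + 1)) :
    (Measure.pi fun _ : Fin K => μ)
      {ω : Fin K → Θ |
        (∀ θ : Θ, f θ - (⨆ i : Fin K, |f (ω i) - ρ (ω i)|) ≥ τ) →
          μ {θ : Θ | ρ θ ≥ τ} ≥ 1 - ENNReal.ofReal ε}
      ≥ 1 - ENNReal.ofReal η := by
  obtain ⟨hε0, hε1⟩ := hε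
  obtain ⟨hη0, hη1⟩ := hη
  set g : Θ → ℝ := fun θ => |f θ - ρ θ| with hgdef
  have hgm : Measurable g := (hf.sub hρ).abs
  -- trivial case ε = 1
  rcases eq_or_lt_of_le hε1 with hε1 | hε1
  · have hset : {ω : Fin K → Θ |
        (∀ θ : Θ, f θ - (⨆ i : Fin K, |f (ω i) - ρ (ω i)|) ≥ τ) →
          μ {θ : Θ | ρ θ ≥ τ} ≥ 1 - ENNReal.ofReal ε} = Set.univ := by
      ext ω
      simp only [Set.mem_setOf_eq, Set.mem_univ, iff_true]
      intro _
      rw [hε1, ENNReal.ofReal_one, tsub_self]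
      exact zero_le
    rw [hset, measure_univ]
    exact tsub_le_self
  -- main case ε < 1
  set c : ENNReal := ENNReal.ofReal (1 - ε) with hcdef
  have hc0 : 0 < c := ENNReal.ofReal_pos.mpr (by linarith)
  have hc1 : c < 1 := by
    rw [hcdef, ← ENNReal.ofReal_one]
    exact ENNReal.ofReal_lt_ofReal_iff_of_nonneg (by linarith) |>.mpr (by linarith)
  set S : Set ℝ := {t : ℝ | c ≤ μ {θ | g θ ≤ t}} with hSdef
  have hSmono : ∀ t ∈ S, ∀ t', t ≤ t' → t' ∈ S := by
    intro t ht t' htt'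
    exact le_trans ht (measure_mono fun θ hθ => le_trans hθ htt')
  have hSne : S.Nonempty := by
    have hmono : Monotone (fun n : ℕ => {θ | g θ ≤ (n : ℝ)}) := by
      intro m n hmn θ hθ
      simp only [Set.mem_setOf_eq] at hθ ⊢
      exact le_trans hθ (Nat.cast_le.mpr hmn)
    have hun : (⋃ n : ℕ, {θ | g θ ≤ (n : ℝ)}) = Set.univ := by
      ext θ
      simp only [Set.mem_iUnion, Set.mem_setOf_eq, Set.mem_univ, iff_true]
      exact exists_nat_ge (g θ)
    have htend := tendsto_measure_iUnion_atTop (μ := μ) hmono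
    rw [hun, measure_univ] at htend
    obtain ⟨n, hn⟩ := (htend.eventually (eventually_ge_nhds hc1)).exists
    exact ⟨n, hn⟩
  have hSbdd : BddBelow S := by
    refine ⟨0, fun t ht => ?_⟩
    by_contra h
    push_neg at h
    have hempty : {θ | g θ ≤ t} = ∅ := by
      ext θ
      simp only [Set.mem_setOf_eq, Set.mem_empty_iff_false, iff_false, not_le]
      exact lt_of_lt_of_le h (abs_nonneg _)
    rw [hSdef] at ht
    simp only [Set.mem_setOf_eq, hempty, measure_empty] at ht
    exact absurd (le_antisymm ht zero_le) (ne_of_gt hc0)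
  set t₀ : ℝ := sInf S with ht₀def
  -- t₀ ∈ S (right-continuity of the CDF)
  have ht₀S : t₀ ∈ S := by
    have key : ∀ n : ℕ, c ≤ μ {θ | g θ ≤ t₀ + 1 / (n + 1)} := by
      intro n
      have hpos : (0 : ℝ) < 1 / (n + 1) := by positivity
      obtain ⟨t, htS, htlt⟩ := exists_lt_of_csInf_lt hSne (lt_add_of_pos_right t₀ hpos)
      exact hSmono t htS _ htlt.le
    have hiInter : {θ | g θ ≤ t₀} = ⋂ n : ℕ, {θ | g θ ≤ t₀ + 1 / (n + 1)} := by
      ext θ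
      simp only [Set.mem_setOf_eq, Set.mem_iInter]
      constructor
      · intro h n
        have : (0 : ℝ) < 1 / (n + 1) := by positivity
        linarith
      · intro h
        by_contra hcon
        push_neg at hcon
        obtain ⟨n, hn⟩ := exists_nat_one_div_lt (sub_pos.mpr hcon)
        have := h n
        linarith
    have hanti : Antitone (fun n : ℕ => {θ | g θ ≤ t₀ + 1 / (n + 1)}) := by
      intro m n hmn θ hθ
      have h1 : (1 : ℝ) / (n + 1) ≤ 1 / (m + 1) := by
        apply one_div_le_one_div_of_le (by positivity)
        exact_mod_cast add_le_add_left (Nat.cast_le.mpr hmn) 1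
      simp only [Set.mem_setOf_eq] at hθ ⊢
      linarith
    have htend := tendsto_measure_iInter_atTop
      (fun n => (measurableSet_le hgm measurable_const).nullMeasurableSet)
      hanti ⟨0, measure_ne_top μ _⟩
    rw [hSdef]
    simp only [Set.mem_setOf_eq]
    rw [hiInter]
    exact ge_of_tendsto htend (Eventually.of_forall key)
  -- the open lower tail has measure ≤ c
  have hlt : μ {θ | g θ < t₀} ≤ c := by
    have hiUnion : {θ | g θ < t₀} = ⋃ n : ℕ, {θ | g θ ≤ t₀ - 1 / (n + 1)} := by
      ext θ
      simp only [Set.mem_setOf_eq, Set.mem_iUnion]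
      constructor
      · intro h
        obtain ⟨n, hn⟩ := exists_nat_one_div_lt (sub_pos.mpr h)
        exact ⟨n, by linarith⟩
      · rintro ⟨n, hn⟩
        have : (0 : ℝ) < 1 / (n + 1) := by positivity
        linarith
    have hmono : Monotone (fun n : ℕ => {θ | g θ ≤ t₀ - 1 / (n + 1)}) := by
      intro m n hmn θ hθ
      have h1 : (1 : ℝ) / (n + 1) ≤ 1 / (m + 1) := by
        apply one_div_le_one_div_of_le (by positivity)
        exact_mod_cast add_le_add_left (Nat.cast_le.mpr hmn) 1
      simp only [Set.mem_setOf_eq] at hθ ⊢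
      linarith
    have htend := tendsto_measure_iUnion_atTop (μ := μ) hmono
    rw [← hiUnion] at htend
    refine le_of_tendsto htend (Eventually.of_forall fun n => ?_)
    have hnot : t₀ - 1 / (n + 1) ∉ S := by
      intro hmem
      have := csInf_le hSbdd hmem
      have hpos : (0 : ℝ) < 1 / (n + 1) := by positivity
      rw [← ht₀def] at this
      linarith
    rw [hSdef] at hnot
    simp only [Set.mem_setOf_eq, not_le] at hnot
    exact hnot.le
  -- bad event: all samples have g < t₀
  set B : Set (Fin K → Θ) := Set.pi Set.univ (fun _ : Fin K => {x | g x < t₀}) with hBdef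
  have hBmeas : MeasurableSet B :=
    MeasurableSet.univ_pi (fun _ => measurableSet_lt hgm measurable_const)
  have hBval : (Measure.pi fun _ : Fin K => μ) B = μ {x | g x < t₀} ^ K := by
    rw [hBdef, Measure.pi_pi]
    simp [Finset.prod_const]
  -- real inequality (1-ε)^K ≤ η
  have hKpos : (0 : ℝ) < K := by exact_mod_cast hK
  have hreal : (1 - ε) ^ K ≤ η := by
    have h1 : 1 - ε ≤ Real.exp (-ε) := by
      have := Real.add_one_le_exp (-ε); linarith
    have h2 : (1 - ε) ^ K ≤ Real.exp (-ε) ^ K :=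
      pow_le_pow_left₀ (by linarith) h1 K
    have h3 : Real.exp (-ε) ^ K = Real.exp (-(K * ε)) := by
      rw [← Real.exp_nat_mul]; ring_nf
    have hlog : Real.log (1 / η) = -Real.log η := by
      rw [one_div, Real.log_inv]
    have hlogη : Real.log η ≤ 0 := Real.log_nonpos hη0.le hη1.le
    have hKε : K * ε ≥ 2 * (-Real.log η + 1) := by
      have := mul_le_mul_of_nonneg_left hcond hKpos.le
      rw [hlog] at this
      calc K * ε ≥ K * ((2 / K) * (-Real.log η + 1)) := this
        _ = 2 * (-Real.log η + 1) := by field_simp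
    have h4 : -(K * ε) ≤ Real.log η := by nlinarith
    calc (1 - ε) ^ K ≤ Real.exp (-(K * ε)) := by rw [← h3]; exact h2
      _ ≤ Real.exp (Real.log η) := Real.exp_le_exp.mpr h4
      _ = η := Real.exp_log hη0
  have hBle : (Measure.pi fun _ : Fin K => μ) B ≤ ENNReal.ofReal η := by
    rw [hBval]
    calc μ {x | g x < t₀} ^ K ≤ c ^ K := pow_le_pow_left₀ zero_le hlt K
      _ = ENNReal.ofReal ((1 - ε) ^ K) := by
          rw [hcdef, ← ENNReal.ofReal_pow (by linarith)]
      _ ≤ ENNReal.ofReal η := ENNReal.ofReal_le_ofReal hreal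
  -- good event implies the desired implication
  haveI : Nonempty (Fin K) := ⟨⟨0, hK⟩⟩
  have hsub : Bᶜ ⊆ {ω : Fin K → Θ |
      (∀ θ : Θ, f θ - (⨆ i : Fin K, |f (ω i) - ρ (ω i)|) ≥ τ) →
        μ {θ : Θ | ρ θ ≥ τ} ≥ 1 - ENNReal.ofReal ε} := by
    intro ω hω hyp
    rw [hBdef] at hω
    simp only [Set.mem_compl_iff, Set.mem_pi, Set.mem_univ, Set.mem_setOf_eq, not_forall,
      not_lt] at hω
    obtain ⟨i, -, hi⟩ := hω
    set lam : ℝ := ⨆ i : Fin K, |f (ω i) - ρ (ω i)| with hlam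
    have hlam_ge : t₀ ≤ lam := by
      refine le_trans hi ?_
      exact le_ciSup (f := fun i : Fin K => |f (ω i) - ρ (ω i)|)
        (Set.Finite.bddAbove (Set.finite_range _)) i
    have hincl : {θ | g θ ≤ t₀} ⊆ {θ : Θ | ρ θ ≥ τ} := by
      intro θ hθ
      have h1 : |f θ - ρ θ| ≤ lam := le_trans hθ hlam_ge
      have h2 : f θ - lam ≥ τ := hyp θ
      have h3 : f θ - ρ θ ≤ |f θ - ρ θ| := le_abs_self _
      simp only [Set.mem_setOf_eq]
      linarith
    calc (1 : ENNReal) - ENNReal.ofReal ε = ENNReal.ofReal (1 - ε) := by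
          rw [ENNReal.ofReal_sub 1 hε0.le, ENNReal.ofReal_one]
      _ ≤ μ {θ | g θ ≤ t₀} := ht₀S
      _ ≤ μ {θ : Θ | ρ θ ≥ τ} := measure_mono hincl
  -- conclude
  calc (1 : ENNReal) - ENNReal.ofReal η
      ≤ 1 - (Measure.pi fun _ : Fin K => μ) B := tsub_le_tsub_left hBle 1
    _ = (Measure.pi fun _ : Fin K => μ) Bᶜ := by
        rw [measure_compl hBmeas (measure_ne_top _ _), measure_univ]
    _ ≤ _ := measure_mono hsub
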